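/- For every n ≥ 2, the map A ↦ v_A is a bijection from the set of subsets of {1, …, n−1} onto the set of lecture hall partitions λ ∈ ℤ^n with λ_n − λ_{n−1} = 1. In particular, there are exactly 2^{n−1} lecture hall partitions of degree 1 with respect to the grading λ ↦ λ_n − λ_{n−1}. -/

import Mathlib

/-- A lecture hall partition of length `n`: a vector `λ ∈ ℤⁿ` (indexed `0,…,n-1`,
corresponding to `λ_1,…,λ_n`) with `0 ≤ λ_1` and `i·λ_{i+1} ≥ (i+1)·λ_i` for `1 ≤ i ≤ n-1`. -/
def IsLectureHall (n : ℕ) (l : Fin n → ℤ) : Prop :=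
  (∀ h : 0 < n, 0 ≤ l ⟨0, h⟩) ∧
  ∀ i : ℕ, ∀ h : i + 1 < n,
    ((i : ℤ) + 1) * l ⟨i + 1, h⟩ ≥ ((i : ℤ) + 2) * l ⟨i, by omega⟩

/-- For a subset `A = {i_1 < i_2 < ⋯ < i_k} ⊆ {1,…,n-1}`, the vector
`v_A = (0,…,0, i_1, i_2, …, i_k, i_k + 1) ∈ ℤⁿ`: `n - k - 1` leading zeros, then the
elements of `A` in increasing order, and finally `max(A) + 1` (with `v_∅ = (0,…,0,1)`). -/
def vA (n : ℕ) (A : Finset ℕ) : Fin n → ℤ := fun j =>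
  if (j : ℕ) = n - 1 then ((A.sort (· ≤ ·)).getLastD 0 : ℤ) + 1
  else if n - 1 - A.card ≤ (j : ℕ) then
    (((A.sort (· ≤ ·)).getD ((j : ℕ) - (n - 1 - A.card)) 0 : ℕ) : ℤ)
  else 0

private theorem getLastD_eq_getD' : ∀ (a : ℕ) (l : List ℕ) (d : ℕ),
    (a :: l).getLastD d = (a :: l).getD l.length d := by
  intro a l
  induction l generalizing a with
  | nil => simp
  | cons b t ih =>
    intro d
    rw [List.getLastD_cons, ih b a]
    rw [List.getD_eq_getElem _ _ (by simp), List.getD_eq_getElem _ _ (by simp)]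
    simp

private theorem getLastD_eq_getD {l : List ℕ} (h : l ≠ []) (d : ℕ) :
    l.getLastD d = l.getD (l.length - 1) d := by
  cases l with
  | nil => simp at h
  | cons a t => simpa using getLastD_eq_getD' a t d

private theorem sorted_gap {l : List ℕ} (hl : l.Pairwise (· < ·)) :
    ∀ d i, i + d < l.length → l.getD i 0 + d ≤ l.getD (i + d) 0 := by
  intro d
  induction d with
  | zero => simp
  | succ d ih =>
    intro i h
    have h1 := ih i (by omega)
    have h2 : l.getD (i + (d + 1)) 0 = l.getD (i + d + 1) 0 := by
      rw [show i + (d + 1) = i + d + 1 by omega]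
    have h3 : l.getD (i + d) 0 < l.getD (i + d + 1) 0 := by
      have := hl.rel_get_of_lt (a := ⟨i + d, by omega⟩) (b := ⟨i + d + 1, by omega⟩)
        (by simp [Fin.lt_def])
      simp only [List.get_eq_getElem] at this
      rw [List.getD_eq_getElem _ _ (by omega : i + d < l.length),
        List.getD_eq_getElem _ _ (by omega : i + d + 1 < l.length)]
      exact this
    omega

private theorem sorted_gap' {l : List ℕ} (hl : l.Pairwise (· < ·)) {i j : ℕ}
    (hij : i ≤ j) (hj : j < l.length) : l.getD i 0 + (j - i) ≤ l.getD j 0 := by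
  have := sorted_gap hl (j - i) i (by omega)
  rwa [show i + (j - i) = j by omega] at this

private theorem sort_getD_mem {A : Finset ℕ} {i : ℕ} (hi : i < A.card) :
    (A.sort (· ≤ ·)).getD i 0 ∈ A := by
  have hlen : (A.sort (· ≤ ·)).length = A.card := Finset.length_sort _
  rw [List.getD_eq_getElem _ _ (by omega)]
  exact (Finset.mem_sort (· ≤ ·)).mp (List.getElem_mem _)

private theorem sort_getD_lb {M : ℕ} {A : Finset ℕ} (hA : A ⊆ Finset.Icc 1 M)
    {i : ℕ} (hi : i < A.card) : i + 1 ≤ (A.sort (· ≤ ·)).getD i 0 := by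
  have hlen : (A.sort (· ≤ ·)).length = A.card := Finset.length_sort _
  have h0 : 1 ≤ (A.sort (· ≤ ·)).getD 0 0 := by
    have := hA (sort_getD_mem (A := A) (i := 0) (by omega))
    exact (Finset.mem_Icc.mp this).1
  have := sorted_gap' (A.sortedLT_sort.pairwise) (Nat.zero_le i) (by omega)
  omega

private theorem sort_getD_ub {M : ℕ} {A : Finset ℕ} (hA : A ⊆ Finset.Icc 1 M)
    {i : ℕ} (hi : i < A.card) : (A.sort (· ≤ ·)).getD i 0 + (A.card - 1 - i) ≤ M := by
  have hlen : (A.sort (· ≤ ·)).length = A.card := Finset.length_sort _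
  have hlast : (A.sort (· ≤ ·)).getD (A.card - 1) 0 ≤ M := by
    have := hA (sort_getD_mem (A := A) (i := A.card - 1) (by omega))
    exact (Finset.mem_Icc.mp this).2
  have := sorted_gap' (A.sortedLT_sort.pairwise) (show i ≤ A.card - 1 by omega) (by omega)
  omega

private theorem vA_at_last {n : ℕ} (hn : 2 ≤ n) (A : Finset ℕ) :
    vA n A ⟨n - 1, Nat.sub_lt (Nat.lt_of_lt_of_le Nat.two_pos hn) Nat.one_pos⟩ = ((A.sort (· ≤ ·)).getLastD 0 : ℤ) + 1 := by
  simp only [vA]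
  rw [if_pos trivial]

private theorem vA_at_mid {n : ℕ} (A : Finset ℕ) (j : ℕ) (h1 : j < n - 1)
    (h2 : n - 1 - A.card ≤ j) :
    vA n A ⟨j, by omega⟩ =
      (((A.sort (· ≤ ·)).getD (j - (n - 1 - A.card)) 0 : ℕ) : ℤ) := by
  simp only [vA]
  rw [if_neg (by omega), if_pos h2]

private theorem vA_at_low {n : ℕ} (A : Finset ℕ) (j : ℕ) (h1 : j < n - 1)
    (h2 : j < n - 1 - A.card) :
    vA n A ⟨j, by omega⟩ = 0 := by
  simp only [vA]
  rw [if_neg (by omega), if_neg (by omega)]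

private theorem card_le {n : ℕ} {A : Finset ℕ} (hA : A ⊆ Finset.Icc 1 (n - 1)) :
    A.card ≤ n - 1 := by
  have := Finset.card_le_card hA
  simpa [Nat.card_Icc] using this

private theorem key_ineq {i x : ℕ} (h : x ≤ i + 1) :
    ((i : ℤ) + 1) * ((x : ℤ) + 1) ≥ ((i : ℤ) + 2) * (x : ℤ) := by
  have h' : (x : ℤ) ≤ (i : ℤ) + 1 := by exact_mod_cast h
  nlinarith [Int.natCast_nonneg x, Int.natCast_nonneg i]

private theorem key_ineq2 {i x y : ℕ} (hx : x ≤ i + 1) (hxy : x + 1 ≤ y) :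
    ((i : ℤ) + 1) * (y : ℤ) ≥ ((i : ℤ) + 2) * (x : ℤ) := by
  have hx' : (x : ℤ) ≤ (i : ℤ) + 1 := by exact_mod_cast hx
  have hy' : (x : ℤ) + 1 ≤ (y : ℤ) := by exact_mod_cast hxy
  nlinarith [Int.natCast_nonneg x, Int.natCast_nonneg i]

private theorem vA_mapsTo {n : ℕ} (hn : 2 ≤ n) {A : Finset ℕ}
    (hA : A ⊆ Finset.Icc 1 (n - 1)) :
    IsLectureHall n (vA n A) ∧
      vA n A ⟨n - 1, Nat.sub_lt (Nat.lt_of_lt_of_le Nat.two_pos hn) Nat.one_pos⟩ - vA n A ⟨n - 2, Nat.sub_lt (Nat.lt_of_lt_of_le Nat.two_pos hn) Nat.two_pos⟩ = 1 := by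
  have hn1 : n - 1 < n := by omega
  have hn2 : n - 2 < n := by omega
  have hk : A.card ≤ n - 1 := card_le hA
  have hlen : (A.sort (· ≤ ·)).length = A.card := Finset.length_sort _
  have hval2 : A.card = 0 → vA n A ⟨n - 2, hn2⟩ = 0 := fun hk0 =>
    vA_at_low (n := n) A (n - 2) (by omega) (by omega)
  have hval2' : 1 ≤ A.card → vA n A ⟨n - 2, hn2⟩ =
      (((A.sort (· ≤ ·)).getD (A.card - 1) 0 : ℕ) : ℤ) := by
    intro hk1
    have h := vA_at_mid (n := n) A (n - 2) (by omega) (by omega)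
    rwa [show n - 2 - (n - 1 - A.card) = A.card - 1 by omega] at h
  have hlast : vA n A ⟨n - 1, hn1⟩ = ((A.sort (· ≤ ·)).getLastD 0 : ℤ) + 1 :=
    vA_at_last hn A
  have hdeg : vA n A ⟨n - 1, hn1⟩ - vA n A ⟨n - 2, hn2⟩ = 1 := by
    by_cases hk0 : A.card = 0
    · have hA0 : A = ∅ := Finset.card_eq_zero.mp hk0
      rw [hlast, hval2 hk0, hA0]
      simp
    · have hk1 : 1 ≤ A.card := by omega
      have hne : A.sort (· ≤ ·) ≠ [] := by
        intro h
        rw [h] at hlen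
        simp at hlen
        omega
      rw [hlast, hval2' hk1, getLastD_eq_getD hne, hlen]
      ring
  have hfirst : 0 < n → 0 ≤ vA n A ⟨0, by omega⟩ := by
    intro _
    by_cases h : n - 1 - A.card ≤ 0
    · rw [vA_at_mid (n := n) A 0 (by omega) h]
      positivity
    · rw [vA_at_low (n := n) A 0 (by omega) (by omega)]
  have hsecond : ∀ i : ℕ, ∀ h : i + 1 < n,
      ((i : ℤ) + 1) * vA n A ⟨i + 1, h⟩ ≥
        ((i : ℤ) + 2) * vA n A ⟨i, Nat.lt_of_succ_lt h⟩ := by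
    intro i hi
    by_cases hi1 : i + 1 < n - 1
    · -- i+1 < n-1
      by_cases hc : i + 1 < n - 1 - A.card
      · rw [vA_at_low (n := n) A (i + 1) hi1 hc,
          vA_at_low (n := n) A i (by omega) (by omega)]
        simp
      · by_cases hc2 : i < n - 1 - A.card
        · rw [vA_at_mid (n := n) A (i + 1) hi1 (by omega),
            vA_at_low (n := n) A i (by omega) hc2]
          rw [mul_zero]
          positivity
        · rw [vA_at_mid (n := n) A (i + 1) hi1 (by omega),
            vA_at_mid (n := n) A i (by omega) (by omega)]
          have hmk : i - (n - 1 - A.card) + 1 < A.card := by omega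
          rw [show i + 1 - (n - 1 - A.card) = i - (n - 1 - A.card) + 1 by omega]
          have hub : (A.sort (· ≤ ·)).getD (i - (n - 1 - A.card)) 0 +
              (A.card - 1 - (i - (n - 1 - A.card))) ≤ n - 1 := sort_getD_ub hA (by omega)
          have hstep : (A.sort (· ≤ ·)).getD (i - (n - 1 - A.card)) 0 + 1 ≤
              (A.sort (· ≤ ·)).getD (i - (n - 1 - A.card) + 1) 0 := by
            have h := sorted_gap' (A.sortedLT_sort.pairwise)
              (show i - (n - 1 - A.card) ≤ i - (n - 1 - A.card) + 1 by omega) (by omega)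
            simpa using h
          have ham : (A.sort (· ≤ ·)).getD (i - (n - 1 - A.card)) 0 ≤ i + 1 := by omega
          exact key_ineq2 ham hstep
    · -- i + 1 = n - 1
      have hieq : i + 1 = n - 1 := by omega
      have e1 : vA n A ⟨i + 1, hi⟩ = ((A.sort (· ≤ ·)).getLastD 0 : ℤ) + 1 := by
        have he : (⟨i + 1, hi⟩ : Fin n) = ⟨n - 1, hn1⟩ := by
          apply Fin.ext; simpa using hieq
        rw [he, hlast]
      rw [e1]
      have he2 : (⟨i, Nat.lt_of_succ_lt hi⟩ : Fin n) = ⟨n - 2, hn2⟩ := by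
        apply Fin.ext; simp; omega
      rw [he2]
      by_cases hk0 : A.card = 0
      · have hA0 : A = ∅ := Finset.card_eq_zero.mp hk0
        rw [hval2 hk0, hA0]
        simp
        positivity
      · have hk1 : 1 ≤ A.card := by omega
        rw [hval2' hk1]
        have hne : A.sort (· ≤ ·) ≠ [] := by
          intro h; rw [h] at hlen; simp at hlen; omega
        rw [getLastD_eq_getD hne, hlen]
        have hub : (A.sort (· ≤ ·)).getD (A.card - 1) 0 +
            (A.card - 1 - (A.card - 1)) ≤ n - 1 := sort_getD_ub hA (by omega)
        have ham : (A.sort (· ≤ ·)).getD (A.card - 1) 0 ≤ i + 1 := by omega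
        exact key_ineq ham
  exact ⟨⟨hfirst, hsecond⟩, hdeg⟩

private theorem vA_mem_iff {n : ℕ} (hn : 2 ≤ n) {A : Finset ℕ}
    (hA : A ⊆ Finset.Icc 1 (n - 1)) (x : ℕ) :
    x ∈ A ↔ ∃ j : ℕ, ∃ h : j < n - 1, 1 ≤ x ∧ vA n A ⟨j, by omega⟩ = (x : ℤ) := by
  have hk : A.card ≤ n - 1 := card_le hA
  have hlen : (A.sort (· ≤ ·)).length = A.card := Finset.length_sort _
  constructor
  · intro hx
    have hxs : x ∈ A.sort (· ≤ ·) := (Finset.mem_sort _).mpr hx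
    obtain ⟨i, hi, hix⟩ := List.getElem_of_mem hxs
    have hik : i < A.card := by omega
    refine ⟨i + (n - 1 - A.card), by omega, (Finset.mem_Icc.mp (hA hx)).1, ?_⟩
    rw [vA_at_mid (n := n) A _ (by omega) (by omega)]
    rw [show i + (n - 1 - A.card) - (n - 1 - A.card) = i by omega]
    rw [List.getD_eq_getElem _ _ (by omega : i < (A.sort (· ≤ ·)).length), hix]
  · rintro ⟨j, hj, hx1, hx2⟩
    by_cases hc : j < n - 1 - A.card
    · rw [vA_at_low (n := n) A j hj hc] at hx2
      omega
    · rw [vA_at_mid (n := n) A j hj (by omega)] at hx2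
      have h : (A.sort (· ≤ ·)).getD (j - (n - 1 - A.card)) 0 = x := by exact_mod_cast hx2
      rw [← h]
      exact sort_getD_mem (by omega)

private theorem vA_surj {n : ℕ} (hn : 2 ≤ n) {l : Fin n → ℤ}
    (hlh : IsLectureHall n l)
    (hdeg : l ⟨n - 1, Nat.sub_lt (Nat.lt_of_lt_of_le Nat.two_pos hn) Nat.one_pos⟩ - l ⟨n - 2, Nat.sub_lt (Nat.lt_of_lt_of_le Nat.two_pos hn) Nat.two_pos⟩ = 1) :
    ∃ A : Finset ℕ, A ⊆ Finset.Icc 1 (n - 1) ∧ vA n A = l := by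
  classical
  have hn1 : n - 1 < n := by omega
  have hn2 : n - 2 < n := by omega
  obtain ⟨h0, hLH⟩ := hlh
  have hdeg' : l ⟨n - 1, hn1⟩ - l ⟨n - 2, hn2⟩ = 1 := hdeg
  clear hdeg
  have lcongr : ∀ {a b : ℕ} (ha : a < n) (hb : b < n), a = b → l ⟨a, ha⟩ = l ⟨b, hb⟩ := by
    intro a b ha hb h
    subst h
    rfl
  -- nonnegativity
  have hnn : ∀ j, ∀ h : j < n, 0 ≤ l ⟨j, h⟩ := by
    intro j
    induction j with
    | zero => intro h; exact h0 h
    | succ j ih =>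
      intro h
      have hle := hLH j h
      have h1 : (0 : ℤ) ≤ ((j : ℤ) + 2) * l ⟨j, Nat.lt_of_succ_lt h⟩ :=
        mul_nonneg (by positivity) (ih (Nat.lt_of_succ_lt h))
      nlinarith [Int.natCast_nonneg j]
  -- monotonicity
  have hmono1 : ∀ j, ∀ h : j + 1 < n, l ⟨j, Nat.lt_of_succ_lt h⟩ ≤ l ⟨j + 1, h⟩ := by
    intro j h
    have hle := hLH j h
    have hj0 := hnn j (Nat.lt_of_succ_lt h)
    nlinarith [Int.natCast_nonneg j]
  have hmono : ∀ a b, ∀ ha : a < n, ∀ hb : b < n, a ≤ b → l ⟨a, ha⟩ ≤ l ⟨b, hb⟩ := by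
    intro a b
    induction b with
    | zero =>
      intro ha hb hab
      exact le_of_eq (lcongr _ _ (by omega))
    | succ b ih =>
      intro ha hb hab
      by_cases hc : a ≤ b
      · exact le_trans (ih ha (Nat.lt_of_succ_lt hb) hc) (hmono1 b hb)
      · exact le_of_eq (lcongr _ _ (by omega))
  -- strict increase where positive
  have hstrict : ∀ j, ∀ h : j + 1 < n, 1 ≤ l ⟨j, Nat.lt_of_succ_lt h⟩ →
      l ⟨j, Nat.lt_of_succ_lt h⟩ + 1 ≤ l ⟨j + 1, h⟩ := by
    intro j h hj1
    have hle := hLH j h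
    nlinarith [Int.natCast_nonneg j]
  -- upper bound
  have hub : ∀ d j, ∀ hj : j < n, j + d = n - 2 → l ⟨j, hj⟩ ≤ (j : ℤ) + 1 := by
    intro d
    induction d with
    | zero =>
      intro j hj hjd
      have hle := hLH (n - 2) (by omega)
      have e1 : l ⟨n - 2 + 1, by omega⟩ = l ⟨n - 1, hn1⟩ := lcongr _ _ (by omega)
      rw [e1] at hle
      have e2 : l ⟨n - 2, Nat.lt_of_succ_lt (by omega)⟩ = l ⟨j, hj⟩ := lcongr _ _ (by omega)
      rw [e2] at hle
      have e3 : l ⟨n - 2, hn2⟩ = l ⟨j, hj⟩ := lcongr _ _ (by omega)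
      rw [e3] at hdeg'
      have hcast : ((n - 2 : ℕ) : ℤ) = (j : ℤ) := by
        have : n - 2 = j := by omega
        exact_mod_cast congrArg (Nat.cast : ℕ → ℤ) this
      have hd2 : l ⟨n - 1, hn1⟩ = l ⟨j, hj⟩ + 1 := by omega
      rw [hd2] at hle
      nlinarith
    | succ d ih =>
      intro j hj hjd
      have h2 := ih (j + 1) (by omega) (by omega)
      have hle := hLH j (by omega)
      have e1 : l ⟨j, Nat.lt_of_succ_lt (by omega : j + 1 < n)⟩ = l ⟨j, hj⟩ :=
        lcongr _ _ rfl
      rw [e1] at hle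
      push_cast at h2 hle ⊢
      nlinarith [Int.natCast_nonneg j]
  -- first positive position
  have hex : ∃ j, n - 1 ≤ j ∨ ∃ h : j < n, 1 ≤ l ⟨j, h⟩ := ⟨n - 1, Or.inl le_rfl⟩
  obtain ⟨j₀, hj₀spec, hj₀min⟩ : ∃ j₀, (n - 1 ≤ j₀ ∨ ∃ h : j₀ < n, 1 ≤ l ⟨j₀, h⟩) ∧
      ∀ m, m < j₀ → ¬(n - 1 ≤ m ∨ ∃ h : m < n, 1 ≤ l ⟨m, h⟩) :=
    ⟨Nat.find hex, Nat.find_spec hex, fun m hm => Nat.find_min hex hm⟩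
  have hj₀le : j₀ ≤ n - 1 := by
    by_contra h
    exact hj₀min (n - 1) (by omega) (Or.inl le_rfl)
  have hbelow : ∀ j, ∀ h : j < n, j < j₀ → l ⟨j, h⟩ = 0 := by
    intro j h hj
    have hmin := hj₀min j hj
    push_neg at hmin
    have h2 := hmin.2 h
    have h3 := hnn j h
    omega
  have hpos : ∀ j, ∀ h : j < n, j₀ ≤ j → j < n - 1 → 1 ≤ l ⟨j, h⟩ := by
    intro j h hj hj2
    rcases hj₀spec with hc | ⟨hc, hc2⟩
    · omega
    · exact le_trans hc2 (hmono j₀ j hc h hj)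
  clear hex hj₀spec hj₀min
  obtain ⟨k, hkdef⟩ : ∃ k, k = n - 1 - j₀ := ⟨_, rfl⟩
  obtain ⟨L, hLdef⟩ : ∃ L : List ℕ, L = (List.range k).map
      (fun m => (l ⟨min (j₀ + m) (n - 2), lt_of_le_of_lt (min_le_right _ _) hn2⟩).toNat) :=
    ⟨_, rfl⟩
  have hLlen : L.length = k := by rw [hLdef]; simp
  have hLget : ∀ m, ∀ hm : m < k, ∀ h : j₀ + m < n,
      L.getD m 0 = (l ⟨j₀ + m, h⟩).toNat := by
    intro m hm h
    rw [List.getD_eq_getElem _ _ (by rw [hLlen]; exact hm)]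
    simp only [hLdef, List.getElem_map, List.getElem_range]
    exact congrArg Int.toNat (lcongr _ _ (by omega))
  have hLsorted : L.Pairwise (· < ·) := by
    rw [List.pairwise_iff_getElem]
    intro a b ha hb hab
    rw [hLlen] at ha hb
    have e1 : L[a] = L.getD a 0 := by
      rw [List.getD_eq_getElem _ _ (by rw [hLlen]; omega)]
    have e2 : L[b] = L.getD b 0 := by
      rw [List.getD_eq_getElem _ _ (by rw [hLlen]; omega)]
    rw [e1, e2, hLget a ha (by omega), hLget b hb (by omega)]
    have hij1 : 1 ≤ l ⟨j₀ + a, by omega⟩ := hpos _ _ (by omega) (by omega)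
    have hstep := hstrict (j₀ + a) (by omega : j₀ + a + 1 < n)
    have e3 : l ⟨j₀ + a, Nat.lt_of_succ_lt (by omega : j₀ + a + 1 < n)⟩ =
        l ⟨j₀ + a, by omega⟩ := lcongr _ _ rfl
    rw [e3] at hstep
    have hstep2 := hstep hij1
    have hmm : l ⟨j₀ + a + 1, by omega⟩ ≤ l ⟨j₀ + b, by omega⟩ :=
      hmono _ _ (by omega) (by omega) (by omega)
    omega
  have hLnodup : L.Nodup := hLsorted.nodup
  have hsort : (L.toFinset).sort (· ≤ ·) = L :=
    (List.toFinset_sort (· ≤ ·) hLnodup).mpr (hLsorted.imp le_of_lt)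
  have hcard : (L.toFinset).card = k := by
    rw [List.toFinset_card_of_nodup hLnodup, hLlen]
  have hsub : L.toFinset ⊆ Finset.Icc 1 (n - 1) := by
    intro x hx
    rw [List.mem_toFinset, hLdef, List.mem_map] at hx
    obtain ⟨m, hm, hmx⟩ := hx
    rw [List.mem_range] at hm
    have hmlt : j₀ + m < n - 1 := by omega
    have hmin : min (j₀ + m) (n - 2) = j₀ + m := by omega
    have heq : l ⟨min (j₀ + m) (n - 2), lt_of_le_of_lt (min_le_right _ _) hn2⟩ =
        l ⟨j₀ + m, by omega⟩ := lcongr _ _ hmin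
    rw [heq] at hmx
    have h1 : 1 ≤ l ⟨j₀ + m, by omega⟩ := hpos _ _ (by omega) hmlt
    have h2 : l ⟨j₀ + m, by omega⟩ ≤ ((j₀ + m : ℕ) : ℤ) + 1 :=
      hub (n - 2 - (j₀ + m)) (j₀ + m) (by omega) (by omega)
    rw [Finset.mem_Icc]
    have hcast : ((j₀ + m : ℕ) : ℤ) + 1 ≤ ((n - 1 : ℕ) : ℤ) := by
      have h3 : (j₀ + m) + 1 ≤ n - 1 := by omega
      exact_mod_cast h3
    omega
  refine ⟨L.toFinset, hsub, ?_⟩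
  funext jf
  obtain ⟨j, hj⟩ := jf
  by_cases hjlt : j < n - 1
  · by_cases hc : j < j₀
    · have hv : vA n L.toFinset ⟨j, hj⟩ = 0 :=
        vA_at_low (n := n) L.toFinset j hjlt (by omega)
      rw [hv, hbelow j hj hc]
    · have hv : vA n L.toFinset ⟨j, hj⟩ =
          ((((L.toFinset).sort (· ≤ ·)).getD (j - (n - 1 - (L.toFinset).card)) 0 : ℕ) : ℤ) :=
        vA_at_mid (n := n) L.toFinset j hjlt (by omega)
      rw [hv, hsort, hcard]
      rw [show n - 1 - k = j₀ by omega]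
      rw [hLget (j - j₀) (by omega) (by omega)]
      have h1 : 1 ≤ l ⟨j₀ + (j - j₀), by omega⟩ := hpos _ _ (by omega) (by omega)
      rw [Int.toNat_of_nonneg (by omega)]
      exact lcongr _ _ (by omega)
  · have hjeq : j = n - 1 := by omega
    have hv : vA n L.toFinset ⟨j, hj⟩ = (((L.toFinset).sort (· ≤ ·)).getLastD 0 : ℤ) + 1 := by
      have he : (⟨j, hj⟩ : Fin n) = ⟨n - 1, hn1⟩ := by
        apply Fin.ext; simpa using hjeq
      rw [he]
      exact vA_at_last hn L.toFinset
    rw [hv, hsort]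
    have e2 : l ⟨j, hj⟩ = l ⟨n - 1, hn1⟩ := lcongr _ _ hjeq
    by_cases hk0 : k = 0
    · have hL0 : L = [] := List.length_eq_zero_iff.mp (by rw [hLlen, hk0])
      rw [hL0]
      simp only [List.getLastD_nil, Nat.cast_zero, zero_add]
      have e1 : l ⟨n - 2, hn2⟩ = 0 := hbelow _ _ (by omega)
      omega
    · have hne : L ≠ [] := by
        intro h
        rw [h] at hLlen
        simp at hLlen
        omega
      rw [getLastD_eq_getD hne, hLlen, hLget (k - 1) (by omega) (by omega)]
      have h1 : 1 ≤ l ⟨j₀ + (k - 1), by omega⟩ := hpos _ _ (by omega) (by omega)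
      rw [Int.toNat_of_nonneg (by omega)]
      have e1 : l ⟨j₀ + (k - 1), by omega⟩ = l ⟨n - 2, hn2⟩ := lcongr _ _ (by omega)
      omega

/-- For every `n ≥ 2`, the map `A ↦ v_A` is a bijection from the subsets of `{1,…,n-1}`
onto the lecture hall partitions `λ ∈ ℤⁿ` with `λ_n - λ_{n-1} = 1`; in particular there
are exactly `2^{n-1}` lecture hall partitions of degree `1`. -/
theorem vA_bijOn_degree_one (n : ℕ) (hn : 2 ≤ n) :
    Set.BijOn (vA n) {A : Finset ℕ | A ⊆ Finset.Icc 1 (n - 1)}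
      {l : Fin n → ℤ |
        IsLectureHall n l ∧ l ⟨n - 1, by omega⟩ - l ⟨n - 2, by omega⟩ = 1} ∧
    Nat.card {l : Fin n → ℤ //
        IsLectureHall n l ∧ l ⟨n - 1, by omega⟩ - l ⟨n - 2, by omega⟩ = 1} =
      2 ^ (n - 1) := by
  have hmaps : Set.MapsTo (vA n) {A : Finset ℕ | A ⊆ Finset.Icc 1 (n - 1)}
      {l : Fin n → ℤ |
        IsLectureHall n l ∧ l ⟨n - 1, by omega⟩ - l ⟨n - 2, by omega⟩ = 1} := by
    intro A hA
    exact vA_mapsTo hn hA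
  have hinj : Set.InjOn (vA n) {A : Finset ℕ | A ⊆ Finset.Icc 1 (n - 1)} := by
    intro A hA B hB heq
    ext x
    rw [vA_mem_iff hn hA x, vA_mem_iff hn hB x]
    constructor
    · rintro ⟨j, h, h1, h2⟩; exact ⟨j, h, h1, by rw [← heq]; exact h2⟩
    · rintro ⟨j, h, h1, h2⟩; exact ⟨j, h, h1, by rw [heq]; exact h2⟩
  have hsurj : Set.SurjOn (vA n) {A : Finset ℕ | A ⊆ Finset.Icc 1 (n - 1)}
      {l : Fin n → ℤ |
        IsLectureHall n l ∧ l ⟨n - 1, by omega⟩ - l ⟨n - 2, by omega⟩ = 1} := by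
    rintro l ⟨hl1, hl2⟩
    obtain ⟨A, hA, hvA⟩ := vA_surj hn hl1 hl2
    exact ⟨A, hA, hvA⟩
  have hbij : Set.BijOn (vA n) {A : Finset ℕ | A ⊆ Finset.Icc 1 (n - 1)}
      {l : Fin n → ℤ |
        IsLectureHall n l ∧ l ⟨n - 1, by omega⟩ - l ⟨n - 2, by omega⟩ = 1} :=
    ⟨hmaps, hinj, hsurj⟩
  refine ⟨hbij, ?_⟩
  have hset : {A : Finset ℕ | A ⊆ Finset.Icc 1 (n - 1)} =
      ↑((Finset.Icc 1 (n - 1)).powerset) := by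
    ext A
    rw [Set.mem_setOf_eq, Finset.mem_coe, Finset.mem_powerset]
  have hncard : ({l : Fin n → ℤ |
      IsLectureHall n l ∧ l ⟨n - 1, by omega⟩ - l ⟨n - 2, by omega⟩ = 1}).ncard =
      2 ^ (n - 1) := by
    rw [← hbij.image_eq, Set.ncard_image_of_injOn hinj, hset,
      Set.ncard_coe_finset, Finset.card_powerset, Nat.card_Icc]
    norm_num
  rwa [← Nat.card_coe_set_eq] at hncard
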